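/- If N = (p_1 p_2 ⋯ p_t)^{2a} = m^2 is a quasiperfect number (where p_1, ..., p_t are distinct primes and a is a positive integer), then 2a + 1 ≡ 3 (mod 8) and every prime factor of 2a + 1 is congruent to 1 or 3 modulo 8. -/

import Mathlib

open Finset

private lemma sum_range_add_aux {M : Type*} [AddCommMonoid M] (f : ℕ → M) (a b : ℕ) :
    ∑ i ∈ range (a + b), f i = ∑ i ∈ range a, f i + ∑ i ∈ range b, f (a + i) := by
  induction b with
  | zero => simp
  | succ b ih =>
    rw [Nat.add_succ, sum_range_succ, ih, sum_range_succ, add_assoc]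

private lemma geom_sum_factor (p d e : ℕ) :
    ∑ k ∈ range (d * e), p ^ k
      = (∑ k ∈ range d, p ^ k) * ∑ j ∈ range e, (p ^ d) ^ j := by
  induction e with
  | zero => simp
  | succ e ih =>
    rw [Nat.mul_succ, sum_range_add_aux, ih, sum_range_succ]
    have h : ∀ i ∈ range d, p ^ (d * e + i) = (p ^ d) ^ e * p ^ i := by
      intro i _
      rw [pow_add, pow_mul]
    rw [Finset.sum_congr rfl h, ← Finset.mul_sum]
    ring

private lemma geom_sum_dvd (p d n : ℕ) (h : d ∣ n) :
    (∑ k ∈ range d, p ^ k) ∣ (∑ k ∈ range n, p ^ k) := by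
  obtain ⟨e, rfl⟩ := h
  rw [geom_sum_factor]
  exact Dvd.intro _ rfl

private lemma key_sum {R : Type*} [CommRing R] (x : R) (hx : x ^ 2 = 1) (a : ℕ) :
    ∑ k ∈ range (2 * a + 1), x ^ k = ((a : R) + 1) + (a : R) * x := by
  induction a with
  | zero => simp
  | succ a ih =>
    have h1 : 2 * (a + 1) + 1 = (2 * a + 1) + 1 + 1 := by ring
    have e1 : x ^ (2 * a + 1) = x := by
      rw [pow_succ, pow_mul, hx, one_pow, one_mul]
    have e2 : x ^ (2 * a + 1 + 1) = 1 := by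
      rw [pow_succ, e1, ← pow_two, hx]
    rw [h1, sum_range_succ, sum_range_succ, ih, e1, e2]
    push_cast
    ring

private lemma two_pow_sum_aux (n : ℕ) : (∑ k ∈ range n, 2 ^ k) + 1 = 2 ^ n := by
  induction n with
  | zero => simp
  | succ n ih =>
    rw [sum_range_succ, pow_succ]
    omega

private lemma cast_of_mod8 {d v : ℕ} (h : d % 8 = v) : (d : ZMod 8) = (v : ℕ) := by
  rw [← ZMod.natCast_mod d 8, h]

private lemma mod8_of_cast {d v : ℕ} (hv : v < 8) (h : (d : ZMod 8) = ((v : ℕ) : ZMod 8)) :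
    d % 8 = v := by
  rw [ZMod.natCast_eq_natCast_iff'] at h
  omega

private lemma odd_sq_zmod8 (m : ℕ) (hm : m % 2 = 1) : ((m : ZMod 8)) ^ 2 = 1 := by
  have h1 : m % 8 < 8 := Nat.mod_lt _ (by norm_num)
  have h2 : m % 8 % 2 = 1 := by
    rw [Nat.mod_mod_of_dvd m (by norm_num : (2:ℕ) ∣ 8)]; exact hm
  rw [← ZMod.natCast_mod m 8]
  rcases (by omega : m % 8 = 1 ∨ m % 8 = 3 ∨ m % 8 = 5 ∨ m % 8 = 7) with h | h | h | h <;>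
    rw [h] <;> decide

/-- A positive integer `N` is quasiperfect if `σ(N) = 2N + 1`. -/
def Quasiperfect (N : ℕ) : Prop :=
  0 < N ∧ ArithmeticFunction.sigma 1 N = 2 * N + 1

/-- If `N = (p₁ p₂ ⋯ p_t)^{2a} = m²` is quasiperfect, then `2a + 1 ≡ 3 (mod 8)`
and every prime factor of `2a + 1` is congruent to `1` or `3` modulo `8`. -/
theorem stmt_2 (t : ℕ) (p : Fin t → ℕ) (a N m : ℕ)
    (hp : ∀ i, (p i).Prime) (hinj : Function.Injective p)
    (ha : 0 < a)
    (hN : N = (∏ i, p i) ^ (2 * a)) (hm : N = m ^ 2)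
    (hq : Quasiperfect N) :
    (2 * a + 1) % 8 = 3 ∧
      ∀ q : ℕ, q.Prime → q ∣ 2 * a + 1 → q % 8 = 1 ∨ q % 8 = 3 := by
  classical
  obtain ⟨hN0, hσ⟩ := hq
  -- the local abbreviation for the sigma value of each prime power
  set S : Fin t → ℕ := fun i => ∑ k ∈ range (2 * a + 1), p i ^ k with hS
  -- product formula
  have hcop : ((univ : Finset (Fin t)) : Set (Fin t)).Pairwise
      (Function.onFun Nat.Coprime fun i => p i ^ (2 * a)) := by
    intro i _ j _ hij
    exact Nat.Coprime.pow _ _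
      ((Nat.coprime_primes (hp i) (hp j)).mpr (fun h => hij (hinj h)))
  have hNprod : N = ∏ i, p i ^ (2 * a) := by rw [hN, Finset.prod_pow]
  have hσi : ∀ i, ArithmeticFunction.sigma 1 (p i ^ (2 * a)) = S i := by
    intro i
    rw [ArithmeticFunction.sigma_one_apply_prime_pow (hp i)]
  have hprod : 2 * N + 1 = ∏ i, S i := by
    rw [← hσ, hNprod,
      ArithmeticFunction.IsMultiplicative.map_prod _
        ArithmeticFunction.isMultiplicative_sigma _ hcop]
    exact Finset.prod_congr rfl (fun i _ => hσi i)
  have hdvd : ∀ i, S i ∣ 2 * N + 1 := by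
    intro i
    rw [hprod]
    exact Finset.dvd_prod_of_mem _ (mem_univ i)
  -- Cattaneo's lemma
  have hCat : ∀ r : ℕ, r.Prime → r ∣ 2 * N + 1 → r % 8 = 1 ∨ r % 8 = 3 := by
    intro r hr hrd
    haveI : Fact r.Prime := ⟨hr⟩
    have hr2 : r ≠ 2 := by
      rintro rfl
      obtain ⟨k, hk⟩ := hrd
      omega
    rw [← ZMod.exists_sq_eq_neg_two_iff hr2]
    have h0 : ((2 * m ^ 2 + 1 : ℕ) : ZMod r) = 0 := by
      rw [ZMod.natCast_eq_zero_iff]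
      rw [hm] at hrd
      exact hrd
    push_cast at h0
    exact ⟨2 * (m : ZMod r), by linear_combination (-2 : ZMod r) * h0⟩
  -- every divisor of `2N+1` is 1 or 3 mod 8
  have hdiv8 : ∀ d : ℕ, d ∣ 2 * N + 1 → d % 8 = 1 ∨ d % 8 = 3 := by
    intro d
    induction d using Nat.strong_induction_on with
    | _ d ih =>
      intro hd
      rcases eq_or_ne d 1 with rfl | hd1
      · left; rfl
      have hd0 : d ≠ 0 := by
        rintro rfl
        rw [Nat.zero_dvd] at hd
        omega
      obtain ⟨r, hr, hrdvd⟩ := Nat.exists_prime_and_dvd hd1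
      obtain ⟨e, rfl⟩ := hrdvd
      have hrσ : r ∣ 2 * N + 1 := dvd_trans (Dvd.intro e rfl) hd
      have heσ : e ∣ 2 * N + 1 := dvd_trans (Dvd.intro_left r rfl) hd
      have he0 : e ≠ 0 := by
        rintro rfl
        exact hd0 (by ring)
      have hlt : e < r * e := by
        have h2 := hr.two_le
        have h3 := Nat.pos_of_ne_zero he0
        nlinarith
      have h1 := hCat r hr hrσ
      have h2 := ih e hlt heσ
      rw [Nat.mul_mod]
      rcases h1 with h1 | h1 <;> rcases h2 with h2 | h2 <;> rw [h1, h2] <;> norm_num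
  -- no prime is 2
  have hp2 : ∀ i, p i ≠ 2 := by
    intro i h2
    have h8 := hdiv8 _ (hdvd i)
    have hsum : S i + 1 = 2 ^ (2 * a + 1) := by
      rw [hS]
      simp only [h2]
      exact two_pow_sum_aux _
    have hpow : (8 : ℕ) ∣ 2 ^ (2 * a + 1) := by
      have h3 : 2 * a + 1 = 3 + (2 * a - 2) := by omega
      rw [h3, pow_add]
      exact Dvd.intro _ rfl
    obtain ⟨c, hc⟩ := hpow
    omega
  have hpodd : ∀ i, p i % 2 = 1 := by
    intro i
    exact Nat.odd_iff.mp ((hp i).odd_of_ne_two (hp2 i))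
  -- m is odd
  have hmodd : m % 2 = 1 := by
    rcases Nat.mod_two_eq_zero_or_one m with h | h
    · exfalso
      have h2m : (2 : ℕ) ∣ m := Nat.dvd_of_mod_eq_zero h
      have h2N : (2 : ℕ) ∣ N := by
        rw [hm]
        exact h2m.pow (by norm_num)
      rw [hNprod] at h2N
      obtain ⟨i, _, hi⟩ := (Nat.prime_two.prime).exists_mem_finset_dvd h2N
      have := Nat.Prime.dvd_of_dvd_pow (Nat.prime_two) hi
      exact hp2 i ((Nat.prime_dvd_prime_iff_eq Nat.prime_two (hp i)).mp this).symm
    · exact h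
  -- sigma(N) ≡ 3 mod 8
  have hσ8 : ((2 * N + 1 : ℕ) : ZMod 8) = 3 := by
    rw [hm]
    push_cast
    rw [odd_sq_zmod8 m hmodd]
    ring
  have hprod8 : ∏ i, ((S i : ℕ) : ZMod 8) = 3 := by
    rw [← Nat.cast_prod, ← hprod, hσ8]
  -- square of each prime is 1 mod 8
  have hx2 : ∀ i, ((p i : ZMod 8)) ^ 2 = 1 := fun i => odd_sq_zmod8 _ (hpodd i)
  -- the sigma formula mod 8
  have hσi8 : ∀ i, ((S i : ℕ) : ZMod 8) = ((a : ZMod 8) + 1) + (a : ZMod 8) * (p i : ZMod 8) := by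
    intro i
    rw [hS]
    push_cast
    exact key_sum _ (hx2 i) a
  have hσi13 : ∀ i, ((S i : ℕ) : ZMod 8) = 1 ∨ ((S i : ℕ) : ZMod 8) = 3 := by
    intro i
    rcases hdiv8 _ (hdvd i) with h | h
    · left; simpa using cast_of_mod8 h
    · right; simpa using cast_of_mod8 h
  -- there exists i with sigma_i ≡ 3 mod 8
  have hex : ∃ i, ((S i : ℕ) : ZMod 8) = 3 := by
    by_contra hcon
    push_neg at hcon
    have hall : ∀ i ∈ univ, ((S i : ℕ) : ZMod 8) = 1 :=
      fun i _ => (hσi13 i).resolve_right (hcon i)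
    rw [Finset.prod_congr rfl hall, Finset.prod_const_one] at hprod8
    exact absurd hprod8 (by decide)
  obtain ⟨i0, hi0⟩ := hex
  -- a is odd
  have haodd : a % 2 = 1 := by
    by_contra hae
    obtain ⟨c, hc⟩ : ∃ c, a = 2 * c := ⟨a / 2, by omega⟩
    obtain ⟨d, hd⟩ := (hp i0).odd_of_ne_two (hp2 i0)
    have hthis := hσi8 i0
    rw [hi0, hc, hd] at hthis
    push_cast at hthis
    have h4 : (4 : ZMod 8) * ((c : ZMod 8) * ((d : ZMod 8) + 1)) = 2 := by
      linear_combination -hthis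
    have hno : ∀ y : ZMod 8, 4 * y ≠ 2 := by decide
    exact hno _ h4
  -- 3 divides 2a+1
  have hz3 : ∀ x : ZMod 3, x = 0 ∨ x = 1 ∨ x = 2 := by decide
  have h22 : (2 : ZMod 3) ^ 2 = 1 := by decide
  have h30 : (3 : ZMod 3) = 0 := by decide
  have h3n : (3 : ℕ) ∣ 2 * a + 1 := by
    by_contra h3n
    have hznz : ∀ i ∈ univ, ((S i : ℕ) : ZMod 3) ≠ 0 := by
      intro i _
      have hcast : ((S i : ℕ) : ZMod 3) = ∑ k ∈ range (2 * a + 1), (p i : ZMod 3) ^ k := by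
        rw [hS]; push_cast; rfl
      rcases hz3 ((p i : ZMod 3)) with hx | hx | hx
      · rw [hcast, hx]
        have hzero : ∑ k ∈ range (2 * a + 1), (0 : ZMod 3) ^ k = 1 := by
          rw [Finset.sum_range_succ']
          simp
        rw [hzero]
        exact one_ne_zero
      · rw [hcast, hx]
        simp only [one_pow, Finset.sum_const, Finset.card_range, nsmul_eq_mul, mul_one]
        intro h0
        rw [ZMod.natCast_eq_zero_iff] at h0
        exact h3n h0
      · rw [hcast, hx, key_sum _ h22]
        have heq1 : ((a : ZMod 3) + 1) + (a : ZMod 3) * 2 = 1 := by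
          linear_combination (a : ZMod 3) * h30
        rw [heq1]
        exact one_ne_zero
    have hne : ((2 * N + 1 : ℕ) : ZMod 3) ≠ 0 := by
      rw [hprod, Nat.cast_prod]
      haveI : Fact (Nat.Prime 3) := ⟨by norm_num⟩
      exact Finset.prod_ne_zero_iff.mpr hznz
    rw [hm] at hne
    push_cast at hne
    rcases hz3 ((m : ZMod 3)) with hx | hx | hx
    · -- 3 ∣ m, so 3 ∣ N, so some p i = 3
      have h3m : (3 : ℕ) ∣ m := by
        rw [← ZMod.natCast_eq_zero_iff]
        exact hx
      have h3N : (3 : ℕ) ∣ N := by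
        rw [hm]
        exact h3m.pow (by norm_num)
      rw [hNprod] at h3N
      obtain ⟨i, _, hi⟩ := ((by norm_num : Nat.Prime 3).prime).exists_mem_finset_dvd h3N
      have h3p : (3 : ℕ) ∣ p i := Nat.Prime.dvd_of_dvd_pow (by norm_num) hi
      have hpi3 : p i = 3 :=
        ((Nat.prime_dvd_prime_iff_eq (by norm_num) (hp i)).mp h3p).symm
      -- then sigma_i ≡ 5 mod 8, contradiction
      obtain ⟨b, hb⟩ : ∃ b, a = 2 * b + 1 := ⟨a / 2, by omega⟩
      have hthis := hσi8 i
      rw [hpi3, hb] at hthis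
      push_cast at hthis
      have h5 : ((S i : ℕ) : ZMod 8) = 5 := by
        rw [hthis]
        have h80 : (8 : ZMod 8) = 0 := by decide
        linear_combination (b : ZMod 8) * h80
      rcases hσi13 i with h | h <;> rw [h5] at h <;> exact absurd h (by decide)
    · rw [hx] at hne
      exact hne (by decide)
    · rw [hx] at hne
      exact hne (by decide)
  -- every prime p i is ±1 mod 8
  have hpm : ∀ i, (p i : ZMod 8) = 1 ∨ (p i : ZMod 8) = 7 := by
    intro i
    have hdvd3 : (∑ k ∈ range 3, p i ^ k) ∣ S i := by
      rw [hS]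
      exact geom_sum_dvd _ _ _ h3n
    have h8 := hdiv8 _ (dvd_trans hdvd3 (hdvd i))
    have hcast : ((∑ k ∈ range 3, p i ^ k : ℕ) : ZMod 8) = 2 + (p i : ZMod 8) := by
      push_cast
      rw [Finset.sum_range_succ, Finset.sum_range_succ, Finset.sum_range_one, hx2 i]
      ring
    rcases h8 with h | h
    · right
      have h' := cast_of_mod8 h
      rw [hcast] at h'
      have : ((1 : ℕ) : ZMod 8) = 1 := by norm_num
      rw [this] at h'
      linear_combination h' - (by decide : (8 : ZMod 8) = 0)
    · left
      have h' := cast_of_mod8 h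
      rw [hcast] at h'
      have : ((3 : ℕ) : ZMod 8) = 3 := by norm_num
      rw [this] at h'
      linear_combination h'
  -- conclusion 1 : 2a+1 ≡ 3 mod 8
  have hn8 : (2 * a + 1) % 8 = 3 := by
    by_contra hn3
    have hncast : ((2 * a + 1 : ℕ) : ZMod 8) ≠ 3 := by
      intro h
      apply hn3
      apply mod8_of_cast (by norm_num)
      rw [h]; norm_num
    have hall : ∀ i ∈ univ, ((S i : ℕ) : ZMod 8) = 1 := by
      intro i _
      rcases hpm i with hx | hx
      · have hthis := hσi8 i
        rw [hx, mul_one] at hthis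
        have hval : ((S i : ℕ) : ZMod 8) = ((2 * a + 1 : ℕ) : ZMod 8) := by
          rw [hthis]
          push_cast
          ring
        rcases hσi13 i with h | h
        · exact h
        · exfalso
          apply hncast
          rw [← hval]
          exact h
      · have hthis := hσi8 i
        rw [hx] at hthis
        rw [hthis]
        linear_combination (a : ZMod 8) * (by decide : (8 : ZMod 8) = 0)
    rw [Finset.prod_congr rfl hall, Finset.prod_const_one] at hprod8
    exact absurd hprod8 (by decide)
  refine ⟨hn8, ?_⟩
  -- conclusion 2 : prime factors of 2a+1
  -- the witness prime with sigma ≡ 3 must be ≡ 1 mod 8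
  have hx1 : (p i0 : ZMod 8) = 1 := by
    rcases hpm i0 with h | h
    · exact h
    · exfalso
      have hthis := hσi8 i0
      rw [h, hi0] at hthis
      have : (3 : ZMod 8) = 1 := by
        rw [hthis]
        linear_combination (a : ZMod 8) * (by decide : (8 : ZMod 8) = 0)
      exact absurd this (by decide)
  intro q hq hqn
  have hdvdq : (∑ k ∈ range q, p i0 ^ k) ∣ S i0 := by
    rw [hS]
    exact geom_sum_dvd _ _ _ hqn
  have h8 := hdiv8 _ (dvd_trans hdvdq (hdvd i0))
  have hcast : ((∑ k ∈ range q, p i0 ^ k : ℕ) : ZMod 8) = (q : ZMod 8) := by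
    push_cast
    simp [hx1]
  rcases h8 with h | h
  · left
    have h' := cast_of_mod8 h
    rw [hcast] at h'
    exact mod8_of_cast (by norm_num) h'
  · right
    have h' := cast_of_mod8 h
    rw [hcast] at h'
    exact mod8_of_cast (by norm_num) h'
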